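/- In System F, a closed normal λ-term t has type B = ∀X.(X → X → X) if and only if t = λx.λy.x or t = λx.λy.y. -/

import Mathlib

inductive Lam : Type
  | var : ℕ → Lam
  | app : Lam → Lam → Lam
  | lam : Lam → Lam
deriving DecidableEq

namespace Lam

/-- Lift (shift up by one) all de Bruijn indices ≥ d. -/
def lift (d : ℕ) : Lam → Lam
  | var n => if n < d then var n else var (n + 1)
  | app u v => app (lift d u) (lift d v)
  | lam u => lam (lift (d + 1) u)

/-- Capture-avoiding substitution of s for the de Bruijn index d. -/
def subst (d : ℕ) (s : Lam) : Lam → Lam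
  | var n => if n = d then s else if n < d then var n else var (n - 1)
  | app u v => app (subst d s u) (subst d s v)
  | lam u => lam (subst (d + 1) (lift 0 s) u)

/-- One-step β-reduction. -/
inductive Step : Lam → Lam → Prop
  | beta (u v : Lam) : Step (app (lam u) v) (subst 0 v u)
  | appL {u u' : Lam} (v : Lam) : Step u u' → Step (app u v) (app u' v)
  | appR (u : Lam) {v v' : Lam} : Step v v' → Step (app u v) (app u v')
  | lam {u u' : Lam} : Step u u' → Step (lam u) (lam u')

/-- β-equivalence: the reflexive-symmetric-transitive closure of β-reduction. -/
inductive BetaEq : Lam → Lam → Prop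
  | step {u v} : Step u v → BetaEq u v
  | refl (u) : BetaEq u u
  | symm {u v} : BetaEq u v → BetaEq v u
  | trans {u v w} : BetaEq u v → BetaEq v w → BetaEq u w

/-- One step of head reduction: contract the head redex. -/
inductive HeadStep : Lam → Lam → Prop
  | beta (u v : Lam) : HeadStep (app (lam u) v) (subst 0 v u)
  | appL {u u' : Lam} (v : Lam) : HeadStep u u' → (∀ w, u ≠ lam w) →
      HeadStep (app u v) (app u' v)
  | lam {u u' : Lam} : HeadStep u u' → HeadStep (lam u) (lam u')

/-- `Heads u v`: u head-reduces to v in finitely many steps. -/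
def Heads : Lam → Lam → Prop := Relation.ReflTransGen HeadStep

/-- A term is normal if it contains no β-redex. -/
def Normal (t : Lam) : Prop := ∀ u, ¬ Step t u

/-- All free de Bruijn indices of the term are < d. -/
def ClosedUnder : ℕ → Lam → Prop
  | d, var n => n < d
  | d, app u v => ClosedUnder d u ∧ ClosedUnder d v
  | d, lam u => ClosedUnder (d + 1) u

/-- A term is closed if it has no free variables. -/
def Closed (t : Lam) : Prop := ClosedUnder 0 t

/-- The de Bruijn index i occurs free in the term. -/
def FreeIn : ℕ → Lam → Prop
  | i, var n => n = i
  | i, app u v => FreeIn i u ∨ FreeIn i v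
  | i, lam u => FreeIn (i + 1) u

/-- n-fold application: (f^n x). -/
def iterApp : ℕ → Lam → Lam → Lam
  | 0, _, x => x
  | n + 1, f, x => app f (iterApp n f x)

/-- The n-th Church numeral λx.λf.(f^n x). -/
def church (n : ℕ) : Lam := lam (lam (iterApp n (var 0) (var 1)))

/-- T = λx.λy.x -/
def Ttm : Lam := lam (lam (var 1))

/-- F = λx.λy.y -/
def Ftm : Lam := lam (lam (var 0))

end Lam

/-- Types / formulas of System F, with de Bruijn type variables. -/
inductive Ty : Type
  | var : ℕ → Ty
  | bot : Ty
  | arrow : Ty → Ty → Ty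
  | all : Ty → Ty
deriving DecidableEq

namespace Ty

def lift (d : ℕ) : Ty → Ty
  | var n => if n < d then var n else var (n + 1)
  | bot => bot
  | arrow a b => arrow (lift d a) (lift d b)
  | all a => all (lift (d + 1) a)

/-- Capture-avoiding substitution of the type G for the type variable d: A[G/X]. -/
def subst (d : ℕ) (G : Ty) : Ty → Ty
  | var n => if n = d then G else if n < d then var n else var (n - 1)
  | bot => bot
  | arrow a b => arrow (subst d G a) (subst d G b)
  | all a => all (subst (d + 1) (lift 0 G) a)

/-- The type variable i occurs free in the type. -/
def Free : ℕ → Ty → Prop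
  | i, var n => n = i
  | _, bot => False
  | i, arrow a b => Free i a ∨ Free i b
  | i, all a => Free (i + 1) a

/-- ¬A := A → ⊥ -/
def neg (a : Ty) : Ty := arrow a bot

end Ty

/-- Curry-style System F typing: Γ ⊢_F t : A. -/
inductive Typing : List Ty → Lam → Ty → Prop
  | var {Γ : List Ty} {n : ℕ} {A : Ty} : Γ[n]? = some A → Typing Γ (Lam.var n) A
  | lam {Γ A B t} : Typing (A :: Γ) t B → Typing Γ (Lam.lam t) (Ty.arrow A B)
  | app {Γ A B u v} : Typing Γ u (Ty.arrow A B) → Typing Γ v A →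
      Typing Γ (Lam.app u v) B
  | allI {Γ A t} : Typing (Γ.map (Ty.lift 0)) t A → Typing Γ t (Ty.all A)
  | allE {Γ A t} (G : Ty) : Typing Γ t (Ty.all A) → Typing Γ t (Ty.subst 0 G A)

/-- Minimal second-order propositional logic (the logic of System F). -/
inductive Prov : List Ty → Ty → Prop
  | ax {Γ A} : A ∈ Γ → Prov Γ A
  | arrI {Γ A B} : Prov (A :: Γ) B → Prov Γ (Ty.arrow A B)
  | arrE {Γ A B} : Prov Γ (Ty.arrow A B) → Prov Γ A → Prov Γ B
  | allI {Γ A} : Prov (Γ.map (Ty.lift 0)) A → Prov Γ (Ty.all A)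
  | allE {Γ A} (G : Ty) : Prov Γ (Ty.all A) → Prov Γ (Ty.subst 0 G A)

/-- Classical second-order propositional logic F_C: F plus double-negation elimination. -/
inductive ProvC : List Ty → Ty → Prop
  | ax {Γ A} : A ∈ Γ → ProvC Γ A
  | arrI {Γ A B} : ProvC (A :: Γ) B → ProvC Γ (Ty.arrow A B)
  | arrE {Γ A B} : ProvC Γ (Ty.arrow A B) → ProvC Γ A → ProvC Γ B
  | allI {Γ A} : ProvC (Γ.map (Ty.lift 0)) A → ProvC Γ (Ty.all A)
  | allE {Γ A} (G : Ty) : ProvC Γ (Ty.all A) → ProvC Γ (Ty.subst 0 G A)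
  | dne {Γ A} : ProvC Γ (Ty.neg (Ty.neg A)) → ProvC Γ A

/-- The Gödel translation A ↦ A*. -/
def godel : Ty → Ty
  | Ty.var n => Ty.neg (Ty.var n)
  | Ty.bot => Ty.bot
  | Ty.arrow a b => Ty.arrow (godel a) (godel b)
  | Ty.all a => Ty.all (godel a)

/-- The type of booleans B = ∀X.(X → X → X). -/
def BoolTy : Ty := Ty.all (Ty.arrow (Ty.var 0) (Ty.arrow (Ty.var 0) (Ty.var 0)))

/-- The type of Church integers N = ∀X.(X → ((X → X) → X)). -/
def NatTy : Ty :=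
  Ty.all (Ty.arrow (Ty.var 0) (Ty.arrow (Ty.arrow (Ty.var 0) (Ty.var 0)) (Ty.var 0)))

/-- Peirce's law P = ∀X∀Y.(((X → Y) → X) → X). -/
def PeirceTy : Ty :=
  Ty.all (Ty.all (Ty.arrow (Ty.arrow (Ty.arrow (Ty.var 1) (Ty.var 0)) (Ty.var 1)) (Ty.var 1)))

/-- Q = P → ∀X.X. -/
def QTy : Ty := Ty.arrow PeirceTy (Ty.all (Ty.var 0))

section Aux
open Lam

namespace Lam

lemma lift_lift (s : Lam) : ∀ c d, c ≤ d → lift c (lift d s) = lift (d+1) (lift c s) := by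
  induction s with
  | var n =>
    intro c d h
    simp only [lift]
    split_ifs <;> simp only [lift] <;> split_ifs <;>
      first | rfl | omega | (exfalso; omega) | (congr 1; omega)
  | app u v ihu ihv => intro c d h; simp [lift, ihu c d h, ihv c d h]
  | lam u ih => intro c d h; simp [lift, ih (c+1) (d+1) (by omega)]

lemma subst_lift (s : Lam) : ∀ (v : Lam) c d, c ≤ d →
    subst (d+1) (lift c v) (lift c s) = lift c (subst d v s) := by
  induction s with
  | var n =>
    intro v c d h
    simp only [lift, subst]
    split_ifs <;> simp only [lift, subst] <;> split_ifs <;>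
      first | rfl | omega | (exfalso; omega) | (congr 1; omega)
  | app u w ihu ihw => intro v c d h; simp [lift, subst, ihu v c d h, ihw v c d h]
  | lam u ih =>
    intro v c d h
    simp only [lift, subst]
    rw [lift_lift v 0 c (by omega), ih (lift 0 v) (c+1) (d+1) (by omega)]

lemma subst_lift_self (s : Lam) : ∀ (v : Lam) d, subst d v (lift d s) = s := by
  induction s with
  | var n =>
    intro v d
    simp only [lift, subst]
    split_ifs <;> simp only [subst] <;> split_ifs <;>
      first | rfl | omega | (exfalso; omega) | (congr 1; omega)
  | app u w ihu ihw => intro v d; simp [lift, subst, ihu, ihw]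
  | lam u ih => intro v d; simp [lift, subst, ih]

def up (σ : ℕ → Lam) : ℕ → Lam
  | 0 => var 0
  | n+1 => lift 0 (σ n)

def msub (σ : ℕ → Lam) : Lam → Lam
  | var n => σ n
  | app u v => app (msub σ u) (msub σ v)
  | lam u => lam (msub (up σ) u)

lemma msub_ext {σ σ' : ℕ → Lam} (t : Lam) (h : ∀ n, σ n = σ' n) :
    msub σ t = msub σ' t := by
  induction t generalizing σ σ' with
  | var n => exact h n
  | app u v ihu ihv => simp only [msub]; rw [ihu h, ihv h]
  | lam u ih =>
    simp only [msub]
    rw [ih (σ := up σ) (σ' := up σ')]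
    rintro (_|n) <;> simp [up, h]

lemma msub_id (t : Lam) : ∀ σ, (∀ n, σ n = var n) → msub σ t = t := by
  induction t with
  | var n => intro σ h; exact h n
  | app u v ihu ihv => intro σ h; simp only [msub]; rw [ihu _ h, ihv _ h]
  | lam u ih =>
    intro σ h; simp only [msub]
    rw [ih]; rintro (_|n) <;> simp [up, h, lift]

lemma subst_msub (t : Lam) : ∀ (σ : ℕ → Lam) d v,
    subst d v (msub σ t) = msub (fun n => subst d v (σ n)) t := by
  induction t with
  | var n => intros; rfl
  | app u w ihu ihw => intro σ d v; simp only [msub, subst]; rw [ihu, ihw]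
  | lam u ih =>
    intro σ d v
    simp only [msub, subst]
    rw [ih]
    congr 1
    apply msub_ext
    rintro (_|n)
    · simp [up, subst]
    · simp only [up]; exact subst_lift (σ n) v 0 d (by omega)

lemma msub_up_subst (σ : ℕ → Lam) (v u : Lam) :
    subst 0 v (msub (up σ) u) = msub (fun n => Nat.rec v (fun k _ => σ k) n) u := by
  rw [subst_msub]
  apply msub_ext
  rintro (_|n)
  · simp [up, subst]
  · simp only [up]; exact subst_lift_self (σ n) v 0

/-- structural no-redex predicate -/
def NoRedex : Lam → Prop
  | var _ => True
  | app u v => (∀ w, u ≠ lam w) ∧ NoRedex u ∧ NoRedex v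
  | lam u => NoRedex u

lemma step_not_noRedex {t u : Lam} (h : Step t u) : ¬ NoRedex t := by
  induction h with
  | beta u v => rintro ⟨h, -⟩; exact h u rfl
  | appL v _ ih => rintro ⟨-, h, -⟩; exact ih h
  | appR u _ ih => rintro ⟨-, -, h⟩; exact ih h
  | lam _ ih => exact ih

lemma normal_of_noRedex {t : Lam} (h : NoRedex t) : Normal t :=
  fun _ hs => step_not_noRedex hs h

lemma noRedex_of_normal {t : Lam} (h : Normal t) : NoRedex t := by
  induction t with
  | var n => trivial
  | app u v ihu ihv =>
    refine ⟨?_, ihu (fun w hw => h _ (Step.appL v hw)),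
      ihv (fun w hw => h _ (Step.appR u hw))⟩
    rintro w rfl
    exact h _ (Step.beta w v)
  | lam u ih => exact ih (fun w hw => h _ (Step.lam hw))

lemma noRedex_subst_var {t : Lam} (h : NoRedex t) : ∀ d m, NoRedex (subst d (var m) t) := by
  induction t with
  | var n => intro d m; simp only [subst]; split_ifs <;> trivial
  | app u v ihu ihv =>
    intro d m
    obtain ⟨h1, h2, h3⟩ := h
    refine ⟨?_, ihu h2 d m, ihv h3 d m⟩
    intro w hw
    cases u with
    | var k => simp only [subst] at hw; split_ifs at hw <;> simp_all
    | app a b => simp [subst] at hw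
    | lam a => exact h1 a rfl
  | lam u ih =>
    intro d m
    simp only [subst, lift]
    have := ih h (d+1) (m+1)
    simpa [lift, NoRedex] using this

lemma red_normal_eq {t u : Lam} (h : Normal t) (hr : Relation.ReflTransGen Step t u) :
    u = t := by
  rcases Relation.ReflTransGen.cases_head hr with rfl | ⟨c, hc, -⟩
  · rfl
  · exact absurd hc (h c)

lemma closed_normal_lam {t : Lam} (hn : Normal t) (hc : Closed t) : ∃ u, t = lam u := by
  induction t with
  | var n => exact absurd hc (by simp [Closed, ClosedUnder])
  | app u v ihu ihv =>
    obtain ⟨hcu, hcv⟩ := hc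
    obtain ⟨w, rfl⟩ := ihu (fun x hx => hn _ (Step.appL v hx)) hcu
    exact ((hn _ (Step.beta w v)).elim)
  | lam u _ => exact ⟨u, rfl⟩

lemma subst_var_self {t : Lam} : ∀ d, ClosedUnder (d+1) t → subst d (var d) t = t := by
  induction t with
  | var n =>
    intro d hc
    simp only [ClosedUnder] at hc
    simp only [subst]
    split_ifs <;> first | (congr 1; omega) | rfl | omega | (exfalso; omega)
  | app u v ihu ihv => intro d hc; simp only [subst]; rw [ihu d hc.1, ihv d hc.2]
  | lam u ih =>
    intro d hc
    simp only [subst, lift, Nat.not_lt_zero, if_false]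
    rw [ih (d+1) hc]

end Lam

/-- semantic candidate: closed under one-step expansion -/
def Cand (S : Set Lam) : Prop := ∀ ⦃s s'⦄, Lam.Step s s' → s' ∈ S → s ∈ S

def consE (S : Set Lam) (ρ : ℕ → Set Lam) : ℕ → Set Lam
  | 0 => S
  | n+1 => ρ n

def insertE (d : ℕ) (X : Set Lam) (ρ : ℕ → Set Lam) : ℕ → Set Lam :=
  fun n => if n < d then ρ n else if n = d then X else ρ (n-1)

def sem : Ty → (ℕ → Set Lam) → Set Lam
  | Ty.var n, ρ => ρ n
  | Ty.bot, _ => ∅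
  | Ty.arrow a b, ρ => {t | ∀ v ∈ sem a ρ, Lam.app t v ∈ sem b ρ}
  | Ty.all a, ρ => {t | ∀ S : Set Lam, Cand S → t ∈ sem a (consE S ρ)}

lemma consE_cand {S ρ} (hS : Cand S) (hρ : ∀ n, Cand (ρ n)) : ∀ n, Cand (consE S ρ n) := by
  rintro (_|n) <;> simp [consE, hS, hρ]

lemma sem_cand (A : Ty) : ∀ ρ, (∀ n, Cand (ρ n)) → Cand (sem A ρ) := by
  induction A with
  | var n => intro ρ h; exact h n
  | bot => intro ρ h s s' _ h'; exact h'.elim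
  | arrow a b iha ihb =>
    intro ρ h s s' hs hmem v hv
    exact ihb ρ h (Lam.Step.appL v hs) (hmem v hv)
  | all a ih =>
    intro ρ h s s' hs hmem S hS
    exact ih (consE S ρ) (consE_cand hS h) hs (hmem S hS)

lemma insertE_consE (d : ℕ) (X S : Set Lam) (ρ : ℕ → Set Lam) :
    insertE (d+1) X (consE S ρ) = consE S (insertE d X ρ) := by
  funext n
  rcases n with _|n
  · simp [insertE, consE]
  · simp only [insertE, consE, Nat.add_sub_cancel]
    rcases lt_trichotomy n d with h|h|h
    · have h1 : n+1 < d+1 := by omega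
      simp [h1, consE, h]
    · subst h
      simp [consE]
    · have h1 : ¬ n+1 < d+1 := by omega
      have h2 : ¬ (n+1 = d+1) := by omega
      obtain ⟨m, rfl⟩ : ∃ m, n = m+1 := ⟨n-1, by omega⟩
      have h3 : ¬ m+1 < d := by omega
      have h4 : ¬ (m+1 = d) := by omega
      simp [h1, h2, h3, h4, consE]

lemma sem_lift (A : Ty) : ∀ d X ρ, sem (Ty.lift d A) (insertE d X ρ) = sem A ρ := by
  induction A with
  | var n =>
    intro d X ρ
    simp only [Ty.lift]
    split_ifs <;> simp only [sem, insertE] <;> split_ifs <;>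
      first | rfl | omega | (exfalso; omega) | (congr 1; omega)
  | bot => intros; rfl
  | arrow a b iha ihb => intro d X ρ; simp [Ty.lift, sem, iha, ihb]
  | all a ih =>
    intro d X ρ
    simp only [Ty.lift, sem]
    ext t
    constructor <;> intro h S hS
    · have := h S hS; rwa [← insertE_consE, ih] at this
    · rw [← insertE_consE, ih]; exact h S hS

lemma consE_eq_insertE (S : Set Lam) (ρ : ℕ → Set Lam) : consE S ρ = insertE 0 S ρ := by
  funext n; cases n <;> simp [consE, insertE]

lemma sem_subst (A : Ty) : ∀ d G ρ, sem (Ty.subst d G A) ρ = sem A (insertE d (sem G ρ) ρ) := by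
  induction A with
  | var n =>
    intro d G ρ
    simp only [Ty.subst]
    split_ifs <;> simp only [sem, insertE] <;> split_ifs <;>
      first | rfl | omega | (exfalso; omega) | (congr 1; omega)
  | bot => intros; rfl
  | arrow a b iha ihb => intro d G ρ; simp [Ty.subst, sem, iha, ihb]
  | all a ih =>
    intro d G ρ
    simp only [Ty.subst, sem]
    ext t
    have key : ∀ S : Set Lam, sem (Ty.lift 0 G) (consE S ρ) = sem G ρ := by
      intro S; rw [consE_eq_insertE, sem_lift]
    constructor <;> intro h S hS
    · have := h S hS
      rw [ih, key, insertE_consE] at this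
      exact this
    · rw [ih, key, insertE_consE]
      exact h S hS

theorem typing_sound {Γ t A} (h : Typing Γ t A) :
    ∀ ρ, (∀ n, Cand (ρ n)) → ∀ σ : ℕ → Lam,
      (∀ n B, Γ[n]? = some B → σ n ∈ sem B ρ) → Lam.msub σ t ∈ sem A ρ := by
  induction h with
  | var hB => intro ρ hρ σ hσ; exact hσ _ _ hB
  | @lam Γ A B t ht ih =>
    intro ρ hρ σ hσ
    intro v hv
    apply sem_cand B ρ hρ (Lam.Step.beta _ v)
    rw [Lam.msub_up_subst]
    apply ih ρ hρ
    rintro (_|n) B' hB'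
    · simp only [List.getElem?_cons_zero, Option.some.injEq] at hB'
      subst hB'; exact hv
    · simp only [List.getElem?_cons_succ] at hB'
      exact hσ n B' hB'
  | app hu hv ihu ihv =>
    intro ρ hρ σ hσ
    exact ihu ρ hρ σ hσ _ (ihv ρ hρ σ hσ)
  | @allI Γ A t ht ih =>
    intro ρ hρ σ hσ S hS
    apply ih (consE S ρ) (consE_cand hS hρ)
    intro n B hB
    rw [List.getElem?_map] at hB
    cases hΓ : Γ[n]? with
    | none => rw [hΓ] at hB; simp at hB
    | some B0 =>
      rw [hΓ] at hB
      simp only [Option.map_some, Option.some.injEq] at hB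
      subst hB
      rw [consE_eq_insertE, sem_lift]
      exact hσ n B0 hΓ
  | @allE Γ A t G ht ih =>
    intro ρ hρ σ hσ
    rw [sem_subst, ← consE_eq_insertE]
    exact ih ρ hρ σ hσ (sem G ρ) (sem_cand G ρ hρ)

end Aux
section MainProof
open Lam

lemma typing_Ttm : Typing [] Lam.Ttm BoolTy := by
  apply Typing.allI
  exact Typing.lam (Typing.lam (Typing.var (by rfl)))

lemma typing_Ftm : Typing [] Lam.Ftm BoolTy := by
  apply Typing.allI
  exact Typing.lam (Typing.lam (Typing.var (by rfl)))

/-- A closed normal term has type B = ∀X.(X → X → X) iff it is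
λx.λy.x or λx.λy.y. -/
theorem systemF_bool_characterization {t : Lam}
    (hnorm : Lam.Normal t) (hcl : Lam.Closed t) :
    Typing [] t BoolTy ↔ t = Lam.Ttm ∨ t = Lam.Ftm := by
  constructor
  · intro hT
    classical
    set S : Set Lam :=
      {s | Relation.ReflTransGen Step s (var 0) ∨ Relation.ReflTransGen Step s (var 1)} with hSdef
    have hS : Cand S := by
      rintro s s' hs (h | h)
      · exact Or.inl (Relation.ReflTransGen.head hs h)
      · exact Or.inr (Relation.ReflTransGen.head hs h)
    have hsem := typing_sound hT (fun _ => S) (fun _ => hS) Lam.var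
      (by intro n B h; simp at h)
    rw [Lam.msub_id _ _ (fun n => rfl)] at hsem
    simp only [BoolTy, sem, Set.mem_setOf_eq] at hsem
    have h0 : (var 0 : Lam) ∈ sem (Ty.var 0) (consE S fun _ => S) :=
      Or.inl Relation.ReflTransGen.refl
    have h1 : (var 1 : Lam) ∈ sem (Ty.var 0) (consE S fun _ => S) :=
      Or.inr Relation.ReflTransGen.refl
    have hmem : Lam.app (Lam.app t (var 0)) (var 1) ∈ S :=
      hsem S hS (var 0) h0 (var 1) h1
    obtain ⟨i, hred⟩ : ∃ i, Relation.ReflTransGen Step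
        (Lam.app (Lam.app t (var 0)) (var 1)) (var i) := by
      rcases hmem with h | h
      exacts [⟨0, h⟩, ⟨1, h⟩]
    obtain ⟨u, rfl⟩ := closed_normal_lam hnorm hcl
    have hu_norm : Normal u := fun x hx => hnorm _ (Step.lam hx)
    have hu_cl : ClosedUnder 1 u := hcl
    -- the only step from (λu) 0 1 is to (u) 1
    have key1 : ∀ x, Step (Lam.app (Lam.app (Lam.lam u) (var 0)) (var 1)) x →
        x = Lam.app u (var 1) := by
      intro x hx
      cases hx with
      | appL _ h =>
        cases h with
        | beta => rw [subst_var_self 0 hu_cl]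
        | appL _ h2 =>
          cases h2 with
          | lam h3 => exact absurd h3 (hu_norm _)
        | appR _ h2 => cases h2
      | appR _ h => cases h
    -- peel the first step
    rcases Relation.ReflTransGen.cases_head hred with heq | ⟨c, hc, hc2⟩
    · exact absurd heq (by simp)
    rw [key1 c hc] at hc2
    -- now analyze u
    cases u with
    | var n =>
      have hnormal : Normal (Lam.app (Lam.var n) (var 1)) :=
        normal_of_noRedex ⟨(fun w h => by cases h), trivial, trivial⟩
      have := red_normal_eq hnormal hc2
      simp at this
    | app p q =>
      have hnormal : Normal (Lam.app (Lam.app p q) (var 1)) :=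
        normal_of_noRedex ⟨(fun w h => by cases h), noRedex_of_normal hu_norm, trivial⟩
      have := red_normal_eq hnormal hc2
      simp at this
    | lam w =>
      have hclw : ClosedUnder 2 w := hu_cl
      have hw_norm : Normal w := fun x hx => hu_norm _ (Step.lam hx)
      have key2 : ∀ x, Step (Lam.app (Lam.lam w) (var 1)) x →
          x = subst 0 (var 1) w := by
        intro x hx
        cases hx with
        | beta => rfl
        | appL _ h =>
          cases h with
          | lam h2 => exact absurd h2 (hw_norm _)
        | appR _ h => cases h
      rcases Relation.ReflTransGen.cases_head hc2 with heq | ⟨c2, hc3, hc4⟩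
      · exact absurd heq (by simp)
      rw [key2 c2 hc3] at hc4
      have hw'_norm : Normal (subst 0 (var 1) w) :=
        normal_of_noRedex (noRedex_subst_var (noRedex_of_normal hw_norm) 0 1)
      have hfin := red_normal_eq hw'_norm hc4
      cases w with
      | var m =>
        have hm : m < 2 := hclw
        interval_cases m
        · right; rfl
        · left; rfl
      | app a b => exact absurd hfin (by simp [subst])
      | lam a => exact absurd hfin (by simp [subst])
  · rintro (rfl | rfl)
    · exact typing_Ttm
    · exact typing_Ftm

end MainProof
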